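/- Let C be an invertible symmetric 3×3 real matrix and v ∈ ℝ³, and set j = C⁻¹ M_v. Then j² = (1/det C)·( v (Cv)ᵀ − (vᵀCv)·I₃ ), where v (Cv)ᵀ is the 3×3 matrix with (i,k) entry v_i (Cv)_k and I₃ is the identity matrix. -/
import Mathlib
open Matrix

/-- The skew-symmetric `3 × 3` matrix of the cross product with `v`:
`crossMatrix v *ᵥ w = v ×₃ w`. -/
def crossMatrix (v : Fin 3 → ℝ) : Matrix (Fin 3) (Fin 3) ℝ :=
  !![0, -v 2, v 1; v 2, 0, -v 0; -v 1, v 0, 0]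

theorem key (C : Matrix (Fin 3) (Fin 3) ℝ) (hsymm : C.IsSymm) (v : Fin 3 → ℝ) :
    C.adjugate * crossMatrix v * (C.adjugate * crossMatrix v) =
      C.det • (Matrix.vecMulVec v (C.mulVec v) - (v ⬝ᵥ C.mulVec v) • (1 : Matrix (Fin 3) (Fin 3) ℝ)) := by
  have h10 : C 1 0 = C 0 1 := by rw [← hsymm.apply]
  have h20 : C 2 0 = C 0 2 := by rw [← hsymm.apply]
  have h21 : C 2 1 = C 1 2 := by rw [← hsymm.apply]
  ext i k
  fin_cases i <;> fin_cases k <;>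
    simp [Matrix.mul_apply, Matrix.adjugate_fin_three, crossMatrix, Fin.sum_univ_three,
      Matrix.det_fin_three, Matrix.vecMulVec_apply, Matrix.mulVec, dotProduct,
      Matrix.one_apply, h10, h20, h21] <;> ring

/-- For an invertible symmetric `3 × 3` real matrix `C` and `v ∈ ℝ³`, the square of
`j = C⁻¹ M_v` is `(det C)⁻¹ • (v (Cv)ᵀ − (vᵀ C v) I₃)`. -/
theorem j_sq_eq (C : Matrix (Fin 3) (Fin 3) ℝ) (hsymm : C.IsSymm)
    (hinv : IsUnit C.det) (v : Fin 3 → ℝ) :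
    (C⁻¹ * crossMatrix v) ^ 2 =
      (C.det)⁻¹ •
        (Matrix.vecMulVec v (C.mulVec v) - (v ⬝ᵥ C.mulVec v) • (1 : Matrix (Fin 3) (Fin 3) ℝ)) := by
  have hd : C.det ≠ 0 := hinv.ne_zero
  rw [pow_two, Matrix.inv_def, Ring.inverse_eq_inv']
  have := key C hsymm v
  rw [Matrix.smul_mul, Matrix.smul_mul, Matrix.mul_smul, smul_smul, this, smul_smul]
  congr 1
  field_simp
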